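/- For all n ≥ 1, φⁿ(2) contains no factor a_{3q}a_{3q+1}⋯a_{3q+11} of length 12 starting at a position divisible by 3 such that a_{3q} = a_{3q+3} = a_{3q+6} = a_{3q+9}. -/

import Mathlib

/-- Letters: `0,1,2` represent `1,2,3`. `sigmaM` exchanges letters 1 and 2. -/
def sigmaM : Fin 3 → Fin 3
  | 0 => 1
  | 1 => 0
  | 2 => 2

/-- `rhoM` exchanges letters 2 and 3. -/
def rhoM : Fin 3 → Fin 3
  | 0 => 0
  | 1 => 2
  | 2 => 1

/-- `phi a = σ(a) · a · ρ(a)`. -/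
def phi (a : List (Fin 3)) : List (Fin 3) := a.map sigmaM ++ a ++ a.map rhoM

/-- Kurosaki word `φⁿ(2)` (the letter 2 is encoded as `1 : Fin 3`). -/
def K (n : ℕ) : List (Fin 3) := phi^[n] [1]

/-- `w` has period `p`. -/
def HasPeriod (w : List (Fin 3)) (p : ℕ) : Prop :=
  0 < p ∧ ∀ i, i + p < w.length → w[i]! = w[i + p]!

def IsLeastPeriod (w : List (Fin 3)) (p : ℕ) : Prop :=
  HasPeriod w p ∧ ∀ q, HasPeriod w q → p ≤ q

/-- every factor has exponent at most 7/4. -/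
def Avoids74 (w : List (Fin 3)) : Prop :=
  ∀ x p, x <:+: w → x ≠ [] → IsLeastPeriod x p → 4 * x.length ≤ 7 * p

/-- `w` contains no nonempty factor of the form `x ++ x`. -/
def SqFree (w : List (Fin 3)) : Prop :=
  ∀ x : List (Fin 3), x ≠ [] → ¬ (x ++ x) <:+: w

/-- the triple of `w` at positions `3k, 3k+1, 3k+2` is a permutation of `123`. -/
def TripleDistinct (w : List (Fin 3)) : Prop :=
  ∀ k, 3 * k + 2 < w.length →
    w[3 * k]! ≠ w[3 * k + 1]! ∧ w[3 * k]! ≠ w[3 * k + 2]! ∧ w[3 * k + 1]! ≠ w[3 * k + 2]!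

/-! ### Auxiliary development -/

/-- The word of first letters of the triples of `K (n+1)`. -/
def G (n : ℕ) : List (Fin 3) := phi^[n] [0]

lemma K_succ (n : ℕ) : K (n + 1) = phi (K n) := Function.iterate_succ_apply' phi n [1]

lemma G_succ (n : ℕ) : G (n + 1) = phi (G n) := Function.iterate_succ_apply' phi n [0]

lemma phi_length (w : List (Fin 3)) : (phi w).length = 3 * w.length := by
  simp [phi]; ring

lemma K_length (n : ℕ) : (K n).length = 3 ^ n := by
  induction n with
  | zero => rfl
  | succ n ih => rw [K_succ, phi_length, ih, pow_succ]; ring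

lemma G_length (n : ℕ) : (G n).length = 3 ^ n := by
  induction n with
  | zero => rfl
  | succ n ih => rw [G_succ, phi_length, ih, pow_succ]; ring

/-! getElem! helper lemmas -/

lemma gE_append_left (a b : List (Fin 3)) (i : ℕ) (h : i < a.length) :
    (a ++ b)[i]! = a[i]! := by
  rw [getElem!_pos (a ++ b) i (by simp; omega), getElem!_pos a i h,
    List.getElem_append_left h]

lemma gE_append_right (a b : List (Fin 3)) (i : ℕ) (h : a.length ≤ i)
    (h2 : i < a.length + b.length) : (a ++ b)[i]! = b[i - a.length]! := by
  rw [getElem!_pos (a ++ b) i (by simp; omega), getElem!_pos b _ (by omega),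
    List.getElem_append_right h]

lemma gE_map (f : Fin 3 → Fin 3) (w : List (Fin 3)) (i : ℕ) (h : i < w.length) :
    (w.map f)[i]! = f (w[i]!) := by
  rw [getElem!_pos (w.map f) i (by simpa using h), getElem!_pos w i h, List.getElem_map]

lemma gE_take (w : List (Fin 3)) (i : ℕ) (h : i < 3) (h3 : 3 ≤ w.length) :
    w[i]! = (w.take 3)[i]! := by
  rw [getElem!_pos w i (by omega), getElem!_pos (w.take 3) i (by simp; omega),
    List.getElem_take]

lemma gE_drop (w : List (Fin 3)) (m k : ℕ) (h : m + k < w.length) :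
    w[m + k]! = (w.drop m)[k]! := by
  rw [getElem!_pos w _ h, getElem!_pos (w.drop m) k (by simp; omega), List.getElem_drop]

/-! element lemmas for `phi` -/

lemma phi_elem_left (w : List (Fin 3)) (j : ℕ) (h : j < w.length) :
    (phi w)[j]! = sigmaM (w[j]!) := by
  rw [phi, gE_append_left _ _ _ (by simp; omega), gE_append_left _ _ _ (by simp; omega),
    gE_map _ _ _ h]

lemma phi_elem_mid (w : List (Fin 3)) (j : ℕ) (h1 : w.length ≤ j) (h2 : j < 2 * w.length) :
    (phi w)[j]! = w[j - w.length]! := by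
  rw [phi, gE_append_left _ _ _ (by simp; omega),
    gE_append_right _ _ _ (by simp; omega) (by simp; omega)]
  simp

lemma phi_elem_right (w : List (Fin 3)) (j : ℕ) (h1 : 2 * w.length ≤ j)
    (h2 : j < 3 * w.length) :
    (phi w)[j]! = rhoM (w[j - 2 * w.length]!) := by
  rw [phi, gE_append_right _ _ _ (by simp; omega) (by simp [phi_length] at h2 ⊢; omega),
    gE_map _ _ _ (by simp; omega)]
  congr 2
  simp; omega

/-- no four consecutive equal letters -/
def NoRun4 (w : List (Fin 3)) : Prop :=
  ∀ i, i + 3 < w.length → ¬ (w[i]! = w[i + 1]! ∧ w[i]! = w[i + 2]! ∧ w[i]! = w[i + 3]!)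

lemma sigmaM_inj : ∀ a b : Fin 3, sigmaM a = sigmaM b → a = b := by decide

lemma rhoM_inj : ∀ a b : Fin 3, rhoM a = rhoM b → a = b := by decide

lemma Ginv : ∀ n, 1 ≤ n →
    ((G n).take 3 = [1, 0, 0] ∨ (G n).take 3 = [0, 1, 1]) ∧
    ((G n).drop ((G n).length - 3) = [1, 0, 0] ∨
      (G n).drop ((G n).length - 3) = [2, 0, 0]) ∧
    NoRun4 (G n) := by
  intro n hn
  induction n with
  | zero => omega
  | succ n ih =>
    rcases Nat.eq_or_lt_of_le hn with h1 | h1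
    · -- n + 1 = 1
      have : n = 0 := by omega
      subst this
      refine ⟨Or.inl (by decide), Or.inl (by decide), ?_⟩
      intro i hi
      rw [G_length] at hi
      norm_num at hi
    · have hn1 : 1 ≤ n := by omega
      obtain ⟨ht, hd, hP⟩ := ih hn1
      set A := G n with hA
      have hL3 : 3 ≤ A.length := by
        rw [hA, G_length]
        calc (3:ℕ) = 3 ^ 1 := (pow_one 3).symm
        _ ≤ 3 ^ n := Nat.pow_le_pow_right (by norm_num) hn1
      set L := A.length with hLdef
      have hGs : G (n + 1) = phi A := G_succ n
      have hGlen : (G (n + 1)).length = 3 * L := by rw [hGs, phi_length]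
      -- boundary words
      obtain ⟨d, hdval, hdeq⟩ : ∃ d, (d = [1, 0, 0] ∨ d = [2, 0, 0]) ∧ A.drop (L - 3) = d :=
        ⟨A.drop (L - 3), hd, rfl⟩
      obtain ⟨t, htval, hteq⟩ : ∃ t, (t = [1, 0, 0] ∨ t = [0, 1, 1]) ∧ A.take 3 = t :=
        ⟨A.take 3, ht, rfl⟩
      have hdrop_elem : ∀ k, k < 3 → A[L - 3 + k]! = d[k]! := by
        intro k hk
        rw [gE_drop A (L - 3) k (by omega), hdeq]
      have htake_elem : ∀ k, k < 3 → A[k]! = t[k]! := by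
        intro k hk
        rw [gE_take A k hk hL3, hteq]
      constructor
      · -- take 3
        have : (G (n + 1)).take 3 = (A.take 3).map sigmaM := by
          rw [hGs, phi, List.take_append_of_le_length (by simp; omega),
            List.take_append_of_le_length (by simp; omega), List.map_take]
        rw [this, hteq]
        rcases htval with rfl | rfl
        · right; decide
        · left; decide
      constructor
      · -- drop (len - 3)
        have h3L : (G (n+1)).length - 3 = (A.map sigmaM ++ A).length + (L - 3) := by
          simp [hGlen]; omega
        have : (G (n + 1)).drop ((G (n+1)).length - 3) = (A.drop (L - 3)).map rhoM := by
          rw [h3L, hGs, phi, List.drop_length_add_append, List.map_drop]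
        rw [this, hdeq]
        rcases hdval with rfl | rfl
        · right; decide
        · left; decide
      · -- NoRun4
        intro i hi
        rw [hGlen] at hi
        rintro ⟨e1, e2, e3⟩
        have hel : ∀ j, j < L → (G (n+1))[j]! = sigmaM (A[j]!) := by
          intro j hj; rw [hGs]; exact phi_elem_left A j hj
        have hem : ∀ j, L ≤ j → j < 2 * L → (G (n+1))[j]! = A[j - L]! := by
          intro j hj hj2; rw [hGs]; exact phi_elem_mid A j hj hj2
        have her : ∀ j, 2 * L ≤ j → j < 3 * L → (G (n+1))[j]! = rhoM (A[j - 2 * L]!) := by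
          intro j hj hj2; rw [hGs]; exact phi_elem_right A j hj hj2
        rcases (by omega : i + 3 < L ∨ (i < L ∧ L ≤ i + 3) ∨ (L ≤ i ∧ i + 3 < 2 * L) ∨
            (L ≤ i ∧ i < 2 * L ∧ 2 * L ≤ i + 3) ∨ 2 * L ≤ i) with h | h | h | h | h
        · -- inside left block
          rw [hel i (by omega), hel (i+1) (by omega)] at e1
          rw [hel i (by omega), hel (i+2) (by omega)] at e2
          rw [hel i (by omega), hel (i+3) (by omega)] at e3
          exact hP i (by omega) ⟨sigmaM_inj _ _ e1, sigmaM_inj _ _ e2, sigmaM_inj _ _ e3⟩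
        · -- crossing first boundary
          obtain ⟨m, hm3, rfl⟩ : ∃ m, m < 3 ∧ i = (L - 3) + m :=
            ⟨i - (L - 3), by omega, by omega⟩
          -- the six letters around boundary
          have key : ∀ k, k < 6 → (G (n+1))[(L - 3) + k]! = (d.map sigmaM ++ t)[k]! := by
            intro k hk
            rcases (by omega : k < 3 ∨ 3 ≤ k) with hk3 | hk3
            · rw [hel _ (by omega), hdrop_elem k hk3,
                gE_append_left _ _ _ (by rcases hdval with rfl | rfl <;> simp <;> omega),
                gE_map _ _ _ (by rcases hdval with rfl | rfl <;> simp <;> omega)]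
            · rw [hem _ (by omega) (by omega), show L - 3 + k - L = k - 3 by omega,
                htake_elem (k - 3) (by omega),
                gE_append_right _ _ _ (by rcases hdval with rfl | rfl <;> simp <;> omega)
                  (by rcases hdval with rfl | rfl <;> rcases htval with rfl | rfl <;>
                    simp <;> omega)]
              congr 1
              rcases hdval with rfl | rfl <;> simp
          rw [key m (by omega), show L - 3 + m + 1 = L - 3 + (m + 1) by omega,
            key (m + 1) (by omega)] at e1
          rw [key m (by omega), show L - 3 + m + 2 = L - 3 + (m + 2) by omega,
            key (m + 2) (by omega)] at e2
          rw [key m (by omega), show L - 3 + m + 3 = L - 3 + (m + 3) by omega,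
            key (m + 3) (by omega)] at e3
          rcases hdval with rfl | rfl <;> rcases htval with rfl | rfl <;>
            interval_cases m <;> (revert e1 e2 e3; decide)
        · -- inside middle block
          rw [hem i (by omega) (by omega), hem (i+1) (by omega) (by omega)] at e1
          rw [hem i (by omega) (by omega), hem (i+2) (by omega) (by omega)] at e2
          rw [hem i (by omega) (by omega), hem (i+3) (by omega) (by omega)] at e3
          rw [show i + 1 - L = (i - L) + 1 by omega] at e1
          rw [show i + 2 - L = (i - L) + 2 by omega] at e2
          rw [show i + 3 - L = (i - L) + 3 by omega] at e3
          exact hP (i - L) (by omega) ⟨e1, e2, e3⟩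
        · -- crossing second boundary
          obtain ⟨m, hm3, rfl⟩ : ∃ m, m < 3 ∧ i = (2 * L - 3) + m :=
            ⟨i - (2 * L - 3), by omega, by omega⟩
          have key : ∀ k, k < 6 → (G (n+1))[(2 * L - 3) + k]! = (d ++ t.map rhoM)[k]! := by
            intro k hk
            rcases (by omega : k < 3 ∨ 3 ≤ k) with hk3 | hk3
            · rw [hem _ (by omega) (by omega), show 2 * L - 3 + k - L = L - 3 + k by omega,
                hdrop_elem k hk3,
                gE_append_left _ _ _ (by rcases hdval with rfl | rfl <;> simp <;> omega)]
            · rw [her _ (by omega) (by omega), show 2 * L - 3 + k - 2 * L = k - 3 by omega,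
                htake_elem (k - 3) (by omega),
                gE_append_right _ _ _ (by rcases hdval with rfl | rfl <;> simp <;> omega)
                  (by rcases hdval with rfl | rfl <;> rcases htval with rfl | rfl <;>
                    simp <;> omega),
                gE_map _ _ _ (by rcases hdval with rfl | rfl <;> rcases htval with rfl | rfl <;>
                  simp <;> omega)]
              congr 2
              rcases hdval with rfl | rfl <;> simp
          rw [key m (by omega), show 2 * L - 3 + m + 1 = 2 * L - 3 + (m + 1) by omega,
            key (m + 1) (by omega)] at e1
          rw [key m (by omega), show 2 * L - 3 + m + 2 = 2 * L - 3 + (m + 2) by omega,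
            key (m + 2) (by omega)] at e2
          rw [key m (by omega), show 2 * L - 3 + m + 3 = 2 * L - 3 + (m + 3) by omega,
            key (m + 3) (by omega)] at e3
          rcases hdval with rfl | rfl <;> rcases htval with rfl | rfl <;>
            interval_cases m <;> (revert e1 e2 e3; decide)
        · -- inside right block
          rw [her i (by omega) (by omega), her (i+1) (by omega) (by omega)] at e1
          rw [her i (by omega) (by omega), her (i+2) (by omega) (by omega)] at e2
          rw [her i (by omega) (by omega), her (i+3) (by omega) (by omega)] at e3
          rw [show i + 1 - 2 * L = (i - 2 * L) + 1 by omega] at e1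
          rw [show i + 2 - 2 * L = (i - 2 * L) + 2 by omega] at e2
          rw [show i + 3 - 2 * L = (i - 2 * L) + 3 by omega] at e3
          exact hP (i - 2 * L) (by omega)
            ⟨rhoM_inj _ _ e1, rhoM_inj _ _ e2, rhoM_inj _ _ e3⟩

lemma NoRun4_G : ∀ m, NoRun4 (G m) := by
  intro m
  cases m with
  | zero =>
    intro i hi
    have : (G 0).length = 1 := rfl
    omega
  | succ m => exact (Ginv (m + 1) (by omega)).2.2

/-- first letters of triples of `K (n+1)` are given by `G n`. -/
lemma KG : ∀ n q, 3 * q < (K (n + 1)).length → (K (n + 1))[3 * q]! = (G n)[q]! := by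
  intro n
  induction n with
  | zero =>
    intro q hq
    rw [K_length] at hq
    norm_num at hq
    have hq0 : q = 0 := by omega
    subst hq0
    decide
  | succ n ih =>
    intro q hq
    have hL : (K (n + 1)).length = 3 * (G n).length := by
      rw [K_length, G_length, pow_succ]; ring
    set L := (K (n + 1)).length with hLdef
    have hK2len : (K (n + 2)).length = 3 * L := by rw [K_succ, phi_length]
    have hGlen2 : (G (n + 1)).length = L := by
      rw [G_succ, phi_length, ← hL]
    rw [hK2len] at hq
    have hGM : (G n).length = L / 3 := by omega
    rcases (by omega : 3 * q < L ∨ (L ≤ 3 * q ∧ 3 * q < 2 * L) ∨ 2 * L ≤ 3 * q) with h | h | h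
    · rw [K_succ, phi_elem_left _ _ (by omega), ih q (by omega), G_succ,
        phi_elem_left _ _ (by omega)]
    · rw [K_succ, phi_elem_mid _ _ (by omega) (by omega),
        show 3 * q - L = 3 * (q - (G n).length) by omega,
        ih _ (by omega), G_succ, phi_elem_mid _ _ (by omega) (by omega)]
    · rw [K_succ, phi_elem_right _ _ (by omega) (by omega),
        show 3 * q - 2 * L = 3 * (q - 2 * (G n).length) by omega,
        ih _ (by omega), G_succ, phi_elem_right _ _ (by omega) (by omega)]

theorem stmt4 : ∀ n : ℕ, 1 ≤ n → ∀ q : ℕ, 3 * q + 11 < (K n).length →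
    ¬ ((K n)[3 * q]! = (K n)[3 * q + 3]! ∧ (K n)[3 * q]! = (K n)[3 * q + 6]! ∧
       (K n)[3 * q]! = (K n)[3 * q + 9]!) := by
  intro n hn q hq
  obtain ⟨m, rfl⟩ : ∃ m, n = m + 1 := ⟨n - 1, by omega⟩
  have hL : (K (m + 1)).length = 3 * (G m).length := by
    rw [K_length, G_length, pow_succ]; ring
  rintro ⟨e1, e2, e3⟩
  rw [show 3 * q + 3 = 3 * (q + 1) by ring] at e1
  rw [show 3 * q + 6 = 3 * (q + 2) by ring] at e2
  rw [show 3 * q + 9 = 3 * (q + 3) by ring] at e3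
  rw [KG m q (by omega), KG m (q + 1) (by omega)] at e1
  rw [KG m q (by omega), KG m (q + 2) (by omega)] at e2
  rw [KG m q (by omega), KG m (q + 3) (by omega)] at e3
  exact NoRun4_G m q (by omega) ⟨e1, e2, e3⟩
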